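/- Let G be a graph constructed from a hypergraph H of girth at least \lceil g/3 \rceil and graphs of girth at least g as follows: take an independent set T in bijection with V(H), and for each hyperedge F of H a disjoint copy of a graph G' of girth at least g, joined to the vertices of T corresponding to F by a perfect matching. Then G has girth at least g. -/

import Mathlib

/-- The hyper-Tutte construction: vertex set an "independent set" copy of `VH`
(the vertices of the hypergraph) together with one copy of `VG` for each hyperedge
index `i : ι`; inside each copy the graph `G'` is placed, and the copy for `i` is
joined to `VH` by the matching `u ↦ m i u`. -/
def hyperTutte {VH VG ι : Type*} (G' : SimpleGraph VG) (m : ι → VG → VH) :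
    SimpleGraph (VH ⊕ ι × VG) :=
  SimpleGraph.fromRel (fun p q =>
    match p, q with
    | Sum.inr (i, u), Sum.inr (j, v) => i = j ∧ G'.Adj u v
    | Sum.inl w, Sum.inr (i, u) => m i u = w
    | _, _ => False)

namespace HT
open SimpleGraph
section generic
variable {V : Type} {G : SimpleGraph V}




lemma support_getElem (p : G.Walk u v) : ∀ (i : ℕ) (h : i < p.support.length),
    p.support[i] = p.getVert i := by
  induction p with
  | nil => intro i h; simp at h; subst h; rfl
  | cons hadj q ih =>
    intro i h
    cases i with
    | zero => simp [Walk.getVert_zero]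
    | succ i =>
      simp only [Walk.support_cons, List.getElem_cons_succ, Walk.getVert_cons_succ]
      exact ih i (by simpa [Walk.length_support] using h)

lemma cycle_getVert_inj {a : V} {w : G.Walk a a} (hw : w.IsCycle)
    {i j : ℕ} (hi : i < w.length) (hj : j < w.length)
    (hij : w.getVert i = w.getVert j) : i = j := by
  have hsup : ∀ k (h : k < w.length), w.support.tail[k]'(by
      simpa [Walk.length_support] using h) = w.getVert (k+1) := by
    intro k h
    have := support_getElem w (k+1) (by simpa [Walk.length_support] using h)
    rw [← this]
    rw [List.getElem_tail]
  have hnd := hw.2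
  have hlen : w.support.tail.length = w.length := by simp [Walk.length_support]
  have key : ∀ k (h : k < w.length), w.support.tail[k]'(by omega) = w.getVert (k+1) := hsup
  have hne3 := hw.three_le_length
  -- handle zero cases: getVert 0 = a = getVert length
  rcases Nat.eq_zero_or_pos i with hi0 | hi0 <;> rcases Nat.eq_zero_or_pos j with hj0 | hj0
  · omega
  · exfalso
    subst hi0
    rw [Walk.getVert_zero] at hij
    -- a = getVert j, j ∈ [1, length)
    have h1 : w.support.tail[j-1]'(by omega) = w.getVert j := by
      have := key (j-1) (by omega); rwa [Nat.sub_add_cancel hj0] at this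
    have h2 : w.support.tail[w.length - 1]'(by omega) = w.getVert w.length := by
      have := key (w.length - 1) (by omega)
      rwa [Nat.sub_add_cancel (by omega)] at this
    rw [Walk.getVert_length] at h2
    have := hnd.getElem_inj_iff.mp (h1.trans (hij.symm.trans h2.symm) : _)
    omega
  · exfalso
    subst hj0
    rw [Walk.getVert_zero] at hij
    have h1 : w.support.tail[i-1]'(by omega) = w.getVert i := by
      have := key (i-1) (by omega); rwa [Nat.sub_add_cancel hi0] at this
    have h2 : w.support.tail[w.length - 1]'(by omega) = w.getVert w.length := by
      have := key (w.length - 1) (by omega)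
      rwa [Nat.sub_add_cancel (by omega)] at this
    rw [Walk.getVert_length] at h2
    have := hnd.getElem_inj_iff.mp (h1.trans (hij.trans h2.symm) : _)
    omega
  · have h1 : w.support.tail[i-1]'(by omega) = w.getVert i := by
      have := key (i-1) (by omega); rwa [Nat.sub_add_cancel hi0] at this
    have h2 : w.support.tail[j-1]'(by omega) = w.getVert j := by
      have := key (j-1) (by omega); rwa [Nat.sub_add_cancel hj0] at this
    have := hnd.getElem_inj_iff.mp (h1.trans (hij.trans h2.symm) : _)
    omega



variable {n : ℕ}

def walkUpTo (c : ZMod n → V) (hadj : ∀ k, G.Adj (c k) (c (k+1))) : ∀ k : ℕ, G.Walk (c 0) (c k)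
  | 0 => Walk.nil.copy rfl (by norm_num)
  | k+1 => ((walkUpTo c hadj k).concat (by push_cast; exact hadj k)).copy rfl (by push_cast; ring_nf)

lemma walkUpTo_length (c : ZMod n → V) (hadj : ∀ k, G.Adj (c k) (c (k+1))) :
    ∀ k, (walkUpTo c hadj k).length = k := by
  intro k
  induction k with
  | zero => simp [walkUpTo, show List.range 1 = [0] from rfl]
  | succ k ih => simp [walkUpTo, Walk.length_concat, ih]

lemma walkUpTo_edges (c : ZMod n → V) (hadj : ∀ k, G.Adj (c k) (c (k+1))) :
    ∀ k, (walkUpTo c hadj k).edges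
    = (List.range k).map (fun t : ℕ => s(c (t : ZMod n), c ((t : ZMod n)+1))) := by
  intro k
  induction k with
  | zero => simp [walkUpTo, show List.range 1 = [0] from rfl]
  | succ k ih =>
    simp [walkUpTo, Walk.edges_concat, ih, List.range_succ]

lemma walkUpTo_support (c : ZMod n → V) (hadj : ∀ k, G.Adj (c k) (c (k+1))) :
    ∀ k, (walkUpTo c hadj k).support
    = (List.range (k+1)).map (fun t : ℕ => c (t : ZMod n)) := by
  intro k
  induction k with
  | zero => simp [walkUpTo, show List.range 1 = [0] from rfl]
  | succ k ih =>
    simp [walkUpTo, Walk.support_concat, ih, List.range_succ (n := k+1)]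

lemma egirth_le_of_fn (c : ZMod n → V) (hadj : ∀ k, G.Adj (c k) (c (k+1)))
    (hn : 3 ≤ n) (hinj : Function.Injective c) :
    G.egirth ≤ n := by
  have hc0 : ((n : ZMod n)) = 0 := by simp
  have hcast : ∀ {i j : ℕ}, i < n → j < n → (i : ZMod n) = j → i = j := by
    intro i j hi hj h
    have := congrArg ZMod.val h
    rwa [ZMod.val_natCast_of_lt hi, ZMod.val_natCast_of_lt hj] at this
  obtain ⟨w, hwlen, hwedges, hwsupp⟩ :
      ∃ w : G.Walk (c 0) (c 0), w.length = n ∧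
        w.edges = (List.range n).map (fun t : ℕ => s(c (t : ZMod n), c ((t : ZMod n)+1))) ∧
        w.support = (List.range (n+1)).map (fun t : ℕ => c (t : ZMod n)) := by
    have h := walkUpTo_length c hadj n
    have he := walkUpTo_edges c hadj n
    have hs := walkUpTo_support c hadj n
    refine ⟨(walkUpTo c hadj n).copy rfl (by rw [hc0]), by simpa using h, by simpa using he,
      by simpa using hs⟩
  have hcyc : w.IsCycle := by
    constructor
    · constructor
      · constructor
        rw [hwedges]
        refine List.Nodup.map_on ?_ List.nodup_range
        intro t1 h1 t2 h2 heq
        simp only [List.mem_range] at h1 h2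
        rw [Sym2.eq_iff] at heq
        rcases heq with ⟨ha, _⟩ | ⟨ha, hb⟩
        · exact hcast h1 h2 (hinj ha)
        · exfalso
          have e1 : (t1 : ZMod n) = (t2 : ZMod n) + 1 := hinj ha
          have e2 : (t1 : ZMod n) + 1 = (t2 : ZMod n) := hinj hb
          have h22 : (t2 : ZMod n) = (t2 : ZMod n) + 2 := by
            conv_lhs => rw [← e2, e1]
            ring
          have h2' : (2 : ZMod n) = 0 := (left_eq_add.mp h22)
          have hdvd : (n : ℕ) ∣ 2 := by
            exact_mod_cast (ZMod.natCast_eq_zero_iff 2 n).mp (by exact_mod_cast h2')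
          have := Nat.le_of_dvd (by norm_num) hdvd
          omega
      · intro h
        have := hwlen
        rw [h] at this
        simp at this
        omega
    · rw [hwsupp]
      rw [List.range_succ_eq_map]
      simp only [List.map_cons, List.tail_cons, List.map_map]
      refine List.Nodup.map_on ?_ List.nodup_range
      intro t1 h1 t2 h2 heq
      simp only [List.mem_range, Function.comp] at h1 h2 heq
      have heq' : ((t1+1 : ℕ) : ZMod n) = ((t2+1 : ℕ) : ZMod n) := by
        apply hinj; push_cast at heq ⊢; exact_mod_cast heq
      have hv := congrArg ZMod.val heq'
      rcases Nat.lt_or_ge (t1+1) n with h | h <;> rcases Nat.lt_or_ge (t2+1) n with h' | h'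
      · rw [ZMod.val_natCast_of_lt h, ZMod.val_natCast_of_lt h'] at hv; omega
      · have ht2 : t2 + 1 = n := by omega
        rw [ZMod.val_natCast_of_lt h, ht2] at hv
        simp [ZMod.val_natCast] at hv
      · have ht1 : t1 + 1 = n := by omega
        rw [ZMod.val_natCast_of_lt h', ht1] at hv
        simp [ZMod.val_natCast] at hv
      · omega
  calc G.egirth ≤ (w.length : ℕ∞) := by
        rw [egirth]
        exact iInf_le_of_le (c 0) (iInf_le_of_le w (iInf_le_of_le hcyc le_rfl))
    _ = n := by exact_mod_cast congrArg Nat.cast hwlen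


lemma shorten {ι VH : Type} (edges : ι → Set VH) :
    ∀ ℓ : ℕ, 2 ≤ ℓ → ∀ (e : ZMod ℓ → ι) (x : ZMod ℓ → VH),
      Function.Injective x → (∀ j, e j ≠ e (j+1)) →
      (∀ j, x j ∈ edges (e j) ∧ x j ∈ edges (e (j+1))) →
      ∃ ℓ' : ℕ, 2 ≤ ℓ' ∧ ℓ' ≤ ℓ ∧ ∃ (e' : ZMod ℓ' → ι) (x' : ZMod ℓ' → VH),
        Function.Injective e' ∧ Function.Injective x' ∧
        ∀ j, x' j ∈ edges (e' j) ∧ x' j ∈ edges (e' (j+1)) := by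
  intro ℓ
  induction ℓ using Nat.strong_induction_on with
  | _ ℓ ih =>
    intro hℓ e x hx hcons hcond
    by_cases he : Function.Injective e
    · exact ⟨ℓ, hℓ, le_rfl, e, x, he, hx, hcond⟩
    · haveI : NeZero ℓ := ⟨by omega⟩
      simp only [Function.Injective, not_forall] at he
      obtain ⟨a, b, hab, hne⟩ := he
      set d : ℕ := (b - a).val with hd
      have hdlt : d < ℓ := ZMod.val_lt _
      have hbad : b = a + (d : ZMod ℓ) := by
        rw [hd, ZMod.natCast_rightInverse (b - a)]; ring
      have hd0 : d ≠ 0 := by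
        intro h
        rw [h] at hbad
        simp at hbad
        exact hne hbad.symm
      have hd1 : d ≠ 1 := by
        intro h
        rw [h] at hbad
        push_cast at hbad
        exact hcons a (hab.trans (by rw [hbad]))
      have hdl1 : d ≠ ℓ - 1 := by
        intro h
        have : a = b + 1 := by
          rw [hbad]
          have : ((d : ℕ) : ZMod ℓ) + 1 = 0 := by
            rw [h]
            have : ((ℓ - 1 : ℕ) : ZMod ℓ) + 1 = ((ℓ - 1 + 1 : ℕ) : ZMod ℓ) := by push_cast; ring
            rw [this, Nat.sub_add_cancel (by omega), ZMod.natCast_self]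
          rw [add_assoc, this, add_zero]
        exact hcons b (hab.symm.trans (by rw [this]))
      have hd2 : 2 ≤ d := by omega
      haveI : NeZero d := ⟨by omega⟩
      -- lift map
      set f : ZMod d → ZMod ℓ := fun j => a + (j.val : ZMod ℓ) with hf
      have hfinj : Function.Injective f := by
        intro j1 j2 h
        simp only [hf] at h
        have h2 : ((j1.val : ℕ) : ZMod ℓ) = ((j2.val : ℕ) : ZMod ℓ) := by
          exact add_left_cancel h
        have := congrArg ZMod.val h2
        rw [ZMod.val_natCast_of_lt (lt_trans (ZMod.val_lt _) hdlt),
            ZMod.val_natCast_of_lt (lt_trans (ZMod.val_lt _) hdlt)] at this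
        exact ZMod.val_injective d this
      -- successor compat: f (j+1) = f j + 1  unless j.val = d - 1, where f (j+1) = a and f j + 1 = a + d
      have hsucc : ∀ j : ZMod d, (j.val < d - 1 ∧ (j+1).val = j.val + 1) ∨ (j.val = d - 1 ∧ (j+1).val = 0) := by
        intro j
        have hjlt : j.val < d := ZMod.val_lt _
        have hone : (1 : ZMod d).val = 1 := ZMod.val_one'' (by omega)
        rcases Nat.lt_or_ge j.val (d - 1) with h | h
        · left
          refine ⟨h, ?_⟩
          rw [ZMod.val_add, hone, Nat.mod_eq_of_lt (by omega)]
        · right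
          have : j.val = d - 1 := by omega
          refine ⟨this, ?_⟩
          rw [ZMod.val_add, hone, this, Nat.sub_add_cancel (by omega), Nat.mod_self]
      have hfa : f 0 = a := by
        simp [hf, ZMod.val_zero]
      have hfb : ∀ j : ZMod d, j.val = d - 1 → f j + 1 = b := by
        intro j hj
        rw [hf]
        simp only []
        rw [hj, hbad]
        have : ((d - 1 : ℕ) : ZMod ℓ) + 1 = ((d : ℕ) : ZMod ℓ) := by
          have : ((d - 1 : ℕ) : ZMod ℓ) + 1 = ((d - 1 + 1 : ℕ) : ZMod ℓ) := by push_cast; ring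
          rw [this, Nat.sub_add_cancel (by omega)]
        rw [add_assoc, this]
      have hfsucc : ∀ j : ZMod d, f (j + 1) = f j + 1 ∨ (f (j+1) = a ∧ f j + 1 = b) := by
        intro j
        rcases hsucc j with ⟨h1, h2⟩ | ⟨h1, h2⟩
        · left
          rw [hf]
          simp only []
          rw [h2]
          push_cast
          ring
        · right
          constructor
          · rw [hf]; simp only []; rw [h2]; simp
          · exact hfb j h1
      have heb : e b = e a := hab.symm
      -- e ∘ f conditions
      have hconsd : ∀ j : ZMod d, e (f j) ≠ e (f (j + 1)) := by
        intro j h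
        rcases hfsucc j with h2 | ⟨h2, h3⟩
        · rw [h2] at h; exact hcons (f j) h
        · rw [h2] at h
          apply hcons (f j)
          rw [h3, heb, ← h]
      have hcondd : ∀ j : ZMod d, x (f j) ∈ edges (e (f j)) ∧ x (f j) ∈ edges (e (f (j+1))) := by
        intro j
        refine ⟨(hcond (f j)).1, ?_⟩
        rcases hfsucc j with h2 | ⟨h2, h3⟩
        · rw [h2]; exact (hcond (f j)).2
        · rw [h2]
          have := (hcond (f j)).2
          rwa [h3, heb] at this
      obtain ⟨ℓ', h1, h2, rest⟩ := ih d hdlt hd2 (e ∘ f) (x ∘ f)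
        (hx.comp hfinj) hconsd hcondd
      exact ⟨ℓ', h1, le_trans h2 (le_of_lt hdlt), rest⟩

end generic

variable {VH VG ι : Type} {G' : SimpleGraph VG} {m : ι → VG → VH}

lemma adj_inl_inl {x y : VH} : ¬ (hyperTutte G' m).Adj (Sum.inl x) (Sum.inl y) := by
  simp [hyperTutte, SimpleGraph.fromRel_adj]

lemma adj_inl_inr {x : VH} {i : ι} {u : VG} :
    (hyperTutte G' m).Adj (Sum.inl x) (Sum.inr (i, u)) ↔ m i u = x := by
  simp [hyperTutte, SimpleGraph.fromRel_adj]

lemma adj_inr_inl {x : VH} {i : ι} {u : VG} :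
    (hyperTutte G' m).Adj (Sum.inr (i, u)) (Sum.inl x) ↔ m i u = x := by
  simp [hyperTutte, SimpleGraph.fromRel_adj]

lemma adj_inr_inr {i j : ι} {u v : VG} :
    (hyperTutte G' m).Adj (Sum.inr (i, u)) (Sum.inr (j, v)) ↔ i = j ∧ G'.Adj u v := by
  constructor
  · intro h
    rw [hyperTutte, SimpleGraph.fromRel_adj] at h
    obtain ⟨hne, h | h⟩ := h
    · exact h
    · exact ⟨h.1.symm, h.2.symm⟩
  · rintro ⟨rfl, h⟩
    rw [hyperTutte, SimpleGraph.fromRel_adj]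
    exact ⟨by simp [h.ne], Or.inl ⟨rfl, h⟩⟩

lemma main (g : ℕ)
    (edges : ι → Set VH) (G' : SimpleGraph VG) (m : ι → VG → VH)
    (hm_inj : ∀ i, Function.Injective (m i))
    (hm_range : ∀ i, Set.range (m i) = edges i)
    (hG'girth : (g : ℕ∞) ≤ G'.egirth)
    (hHgirth : ∀ ℓ : ℕ, 2 ≤ ℓ → ℓ < (g + 2) / 3 →
      ¬ ∃ (e : ZMod ℓ → ι) (x : ZMod ℓ → VH),
          Function.Injective e ∧ Function.Injective x ∧
          ∀ j : ZMod ℓ, x j ∈ edges (e j) ∧ x j ∈ edges (e (j + 1)))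
    {n : ℕ} (hn : 3 ≤ n) (c : ZMod n → (VH ⊕ ι × VG))
    (hcinj : Function.Injective c)
    (hcadj : ∀ k, (hyperTutte G' m).Adj (c k) (c (k+1))) : g ≤ n := by
  haveI : NeZero n := ⟨by omega⟩
  by_cases hall : ∀ k, ∃ p, c k = Sum.inr p
  · -- Case 1: cycle entirely inside the copies; it lies in one copy of G'
    choose p hp using hall
    set I : ZMod n → ι := fun k => (p k).1 with hI
    set U : ZMod n → VG := fun k => (p k).2 with hU
    have hpk : ∀ k, c k = Sum.inr (I k, U k) := by intro k; rw [hI, hU]; exact hp k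
    have hstep : ∀ k, I k = I (k+1) ∧ G'.Adj (U k) (U (k+1)) := by
      intro k
      have := hcadj k
      rw [hpk k, hpk (k+1), adj_inr_inr] at this
      exact this
    have hconst : ∀ k, I k = I 0 := by
      have hnat : ∀ t : ℕ, I (t : ZMod n) = I 0 := by
        intro t
        induction t with
        | zero => norm_num
        | succ t ih =>
          have : ((t+1 : ℕ) : ZMod n) = (t : ZMod n) + 1 := by push_cast; ring
          rw [this, ← (hstep (t : ZMod n)).1, ih]
      intro k
      have := hnat k.val
      rwa [ZMod.natCast_rightInverse k] at this
    have hUinj : Function.Injective U := by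
      intro k1 k2 h
      apply hcinj
      rw [hpk k1, hpk k2, hconst k1, hconst k2, h]
    have hUadj : ∀ k, G'.Adj (U k) (U (k+1)) := fun k => (hstep k).2
    have := egirth_le_of_fn U hUadj hn hUinj
    have hgn : (g : ℕ∞) ≤ (n : ℕ∞) := le_trans hG'girth this
    exact_mod_cast hgn
  · -- Case 2: the cycle meets VH
    push_neg at hall
    obtain ⟨k0, hk0⟩ := hall
    obtain ⟨x0, hx0⟩ : ∃ x0, c k0 = Sum.inl x0 := by
      cases hc : c k0 with
      | inl x => exact ⟨x, rfl⟩
      | inr p => exact absurd hc (hk0 p)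
    -- rotate so that position 0 is a hub
    set cR : ZMod n → (VH ⊕ ι × VG) := fun k => c (k + k0) with hcR
    have hRinj : Function.Injective cR := by
      intro k1 k2 h
      have := hcinj h
      exact add_right_cancel this
    have hRadj : ∀ k, (hyperTutte G' m).Adj (cR k) (cR (k+1)) := by
      intro k
      have := hcadj (k + k0)
      simpa [hcR, add_right_comm] using this
    have hR0 : cR 0 = Sum.inl x0 := by simp [hcR, hx0]
    clear hcadj hcinj hx0 hk0
    -- unroll to ℕ
    set d : ℕ → (VH ⊕ ι × VG) := fun t => cR (t : ZMod n) with hdd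
    have hd_adj : ∀ t : ℕ, (hyperTutte G' m).Adj (d t) (d (t+1)) := by
      intro t
      have := hRadj (t : ZMod n)
      simpa [hdd, Nat.cast_add] using this
    have hd_inj : ∀ t1 t2, t1 < n → t2 < n → d t1 = d t2 → t1 = t2 := by
      intro t1 t2 h1 h2 h
      have := hRinj h
      have := congrArg ZMod.val this
      rwa [ZMod.val_natCast_of_lt h1, ZMod.val_natCast_of_lt h2] at this
    have hd0 : d 0 = Sum.inl x0 := by simpa [hdd] using hR0
    have hdn : d n = Sum.inl x0 := by
      have : ((n : ℕ) : ZMod n) = 0 := ZMod.natCast_self n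
      simp [hdd, this, hR0]
    -- the hub list
    set H : List ℕ := (List.range (n+1)).filter (fun t => (d t).isLeft) with hH
    have hmemH : ∀ t, t ∈ H ↔ t < n + 1 ∧ (d t).isLeft := by
      intro t
      simp [hH, List.mem_filter, List.mem_range]
    have hpwH : H.Pairwise (· < ·) := by
      exact (List.pairwise_lt_range (n := n+1)).sublist List.filter_sublist
    set L : ℕ := H.length with hL
    set t : ℕ → ℕ := fun j => H.getD j 0 with ht
    have htget : ∀ j (h : j < L), t j = H[j] := by
      intro j h
      exact List.getD_eq_getElem H 0 h
    have hmono : ∀ i j, i < j → j < L → t i < t j := by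
      intro i j hij hj
      rw [htget i (lt_trans hij hj), htget j hj]
      exact List.pairwise_iff_getElem.mp hpwH i j (lt_trans hij hj) hj hij
    have hidx : ∀ s, s ∈ H → ∃ i, i < L ∧ t i = s := by
      intro s hs
      obtain ⟨i, hi, hieq⟩ := List.mem_iff_getElem.mp hs
      exact ⟨i, hi, by rw [htget i hi]; exact hieq⟩
    have h0H : (0 : ℕ) ∈ H := (hmemH 0).mpr ⟨by omega, by rw [hd0]; rfl⟩
    have hnH : n ∈ H := (hmemH n).mpr ⟨by omega, by rw [hdn]; rfl⟩
    have hLpos : 1 ≤ L := by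
      obtain ⟨i, hi, _⟩ := hidx 0 h0H
      omega
    have htlt : ∀ j, j < L → t j ≤ n := by
      intro j hj
      rw [htget j hj]
      have : H[j] ∈ H := List.getElem_mem _
      have := (hmemH _).mp this
      omega
    have ht0 : t 0 = 0 := by
      obtain ⟨i, hi, hieq⟩ := hidx 0 h0H
      rcases Nat.eq_zero_or_pos i with rfl | hpos
      · exact hieq
      · have := hmono 0 i hpos hi
        omega
    have htlast : t (L-1) = n := by
      obtain ⟨i, hi, hieq⟩ := hidx n hnH
      rcases Nat.lt_or_ge i (L-1) with h | h
      · have := hmono i (L-1) h (by omega)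
        have := htlt (L-1) (by omega)
        omega
      · have : i = L - 1 := by omega
        rw [← this, hieq]
    set ℓ : ℕ := L - 1 with hℓ
    have hℓ1 : 1 ≤ ℓ := by
      by_contra hcon
      have hℓ0 : ℓ = 0 := by omega
      rw [hℓ0, ht0] at htlast
      omega
    have hLℓ : L = ℓ + 1 := by omega
    -- no hubs strictly between consecutive hubs
    have hbetween : ∀ j, j < ℓ → ∀ s, t j < s → s < t (j+1) → ∃ p, d s = Sum.inr p := by
      intro j hj s h1 h2
      cases hsr : d s with
      | inr p => exact ⟨p, rfl⟩
      | inl x =>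
        exfalso
        have hsH : s ∈ H := (hmemH s).mpr ⟨by
          have := htlt (j+1) (by omega); omega, by rw [hsr]; rfl⟩
        obtain ⟨i, hi, hieq⟩ := hidx s hsH
        rcases Nat.lt_or_ge i (j+1) with h | h
        · rcases Nat.lt_or_ge i j with h' | h'
          · have := hmono i j h' (by omega)
            omega
          · have hij : i = j := by omega
            rw [hij] at hieq
            omega
        · rcases Nat.lt_or_ge (j+1) i with h' | h'
          · have := hmono (j+1) i h' hi
            omega
          · have hij : i = j + 1 := by omega
            rw [hij] at hieq
            omega
    -- index constancy along a run of copy-vertices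
    have hseg : ∀ s k, (∀ r, s ≤ r → r ≤ s + k → ∃ p, d r = Sum.inr p) →
        ∀ i u, d s = Sum.inr (i, u) → ∃ v, d (s + k) = Sum.inr (i, v) := by
      intro s k
      induction k with
      | zero => intro _ i u h; exact ⟨u, h⟩
      | succ k ih =>
        intro hrun i u h
        obtain ⟨v, hv⟩ := ih (fun r h1 h2 => hrun r h1 (by omega)) i u h
        obtain ⟨⟨i', u'⟩, hp'⟩ := hrun (s + k + 1) (by omega) (by omega)
        have hadjk := hd_adj (s + k)
        rw [hv, hp', adj_inr_inr] at hadjk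
        exact ⟨u', by rw [show s + (k+1) = s + k + 1 by omega, hp', hadjk.1]⟩
    -- gaps are at least 2
    have hgap2 : ∀ j, j < ℓ → t j + 2 ≤ t (j+1) := by
      intro j hj
      have h1 : t j < t (j+1) := hmono j (j+1) (by omega) (by omega)
      by_contra hcon
      have heq : t (j+1) = t j + 1 := by omega
      have hj1 : (d (t j)).isLeft := by
        have := (hmemH (t j)).mp (by rw [htget j (by omega)]; exact List.getElem_mem _)
        exact this.2
      have hj2 : (d (t (j+1))).isLeft := by
        have := (hmemH (t (j+1))).mp (by rw [htget (j+1) (by omega)]; exact List.getElem_mem _)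
        exact this.2
      obtain ⟨y1, hy1⟩ := Sum.isLeft_iff.mp hj1
      obtain ⟨y2, hy2⟩ := Sum.isLeft_iff.mp hj2
      have := hd_adj (t j)
      rw [hy1, ← heq, hy2] at this
      exact adj_inl_inl this
    -- values at hubs
    have hhubleft : ∀ j, j < L → ∃ y, d (t j) = Sum.inl y := by
      intro j hj
      have := ((hmemH (t j)).mp (by rw [htget j hj]; exact List.getElem_mem _)).2
      exact Sum.isLeft_iff.mp this
    set xv : ℕ → VH := fun s => Sum.elim id (fun _ => x0) (d s) with hxv
    have hxv_eq : ∀ s y, d s = Sum.inl y → xv s = y := by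
      intro s y h; simp [hxv, h]
    have hdxv : ∀ j, j < L → d (t j) = Sum.inl (xv (t j)) := by
      intro j hj
      obtain ⟨y, hy⟩ := hhubleft j hj
      rw [hxv_eq _ _ hy]
      exact hy
    -- the copy index of each segment
    obtain ⟨⟨i0, u0⟩, hi0⟩ : ∃ p, d 1 = Sum.inr p := by
      apply hbetween 0 (by omega) 1 (by omega)
      have := hgap2 0 (by omega)
      omega
    set iseg : ℕ → ι := fun j => Sum.elim (fun _ => i0) Prod.fst (d (t j + 1)) with hiseg
    have hsegA : ∀ j, j < ℓ → ∃ u, d (t j + 1) = Sum.inr (iseg j, u) := by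
      intro j hj
      obtain ⟨⟨i, u⟩, hp⟩ := hbetween j hj (t j + 1) (by omega)
        (by have := hgap2 j hj; omega)
      refine ⟨u, ?_⟩
      rw [hp, hiseg]
      simp [hp]
    have hsegB : ∀ j, j < ℓ → ∃ v, d (t (j+1) - 1) = Sum.inr (iseg j, v) := by
      intro j hj
      obtain ⟨u, hu⟩ := hsegA j hj
      have hg2 := hgap2 j hj
      have hrun : ∀ r, t j + 1 ≤ r → r ≤ t j + 1 + (t (j+1) - 1 - (t j + 1)) →
          ∃ p, d r = Sum.inr p := by
        intro r h1 h2
        exact hbetween j hj r (by omega) (by omega)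
      have := hseg (t j + 1) (t (j+1) - 1 - (t j + 1)) hrun (iseg j) u hu
      rwa [show t j + 1 + (t (j+1) - 1 - (t j + 1)) = t (j+1) - 1 by omega] at this
    have hfactI : ∀ j, j < ℓ → ∀ u, d (t j + 1) = Sum.inr (iseg j, u) →
        m (iseg j) u = xv (t j) := by
      intro j hj u hu
      have hadj := hd_adj (t j)
      rw [hdxv j (by omega), hu] at hadj
      exact adj_inl_inr.mp hadj
    have hfactII : ∀ j, j < ℓ → ∀ v, d (t (j+1) - 1) = Sum.inr (iseg j, v) →
        m (iseg j) v = xv (t (j+1)) := by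
      intro j hj v hv
      have hadj := hd_adj (t (j+1) - 1)
      have hg2 := hgap2 j hj
      rw [show t (j+1) - 1 + 1 = t (j+1) by omega, hv, hdxv (j+1) (by omega)] at hadj
      exact adj_inr_inl.mp hadj
    have hmemI : ∀ j, j < ℓ → xv (t j) ∈ edges (iseg j) := by
      intro j hj
      obtain ⟨u, hu⟩ := hsegA j hj
      rw [← hm_range]
      exact ⟨u, hfactI j hj u hu⟩
    have hmemII : ∀ j, j < ℓ → xv (t (j+1)) ∈ edges (iseg j) := by
      intro j hj
      obtain ⟨v, hv⟩ := hsegB j hj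
      rw [← hm_range]
      exact ⟨v, hfactII j hj v hv⟩
    have hfactIII : ∀ j, j + 1 < ℓ → iseg j ≠ iseg (j+1) := by
      intro j hj heq
      obtain ⟨v, hv⟩ := hsegB j (by omega)
      obtain ⟨u, hu⟩ := hsegA (j+1) (by omega)
      have h1 := hfactII j (by omega) v hv
      have h2 := hfactI (j+1) (by omega) u hu
      rw [heq] at h1 hv
      have huv : u = v := hm_inj _ (h2.trans h1.symm)
      rw [huv] at hu
      have hp1 : t (j+1) - 1 < n := by
        have := htlt (j+1) (by omega)
        have := hgap2 j (by omega)
        omega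
      have hp2 : t (j+1) + 1 < n := by
        have h3 : t (j+1) + 2 ≤ t (j+2) := hgap2 (j+1) (by omega)
        have h4 := htlt (j+2) (by omega)
        omega
      have heq12 := hd_inj _ _ hp1 hp2 (hv.trans hu.symm)
      have := hgap2 j (by omega)
      omega
    have hwrap : iseg (ℓ-1) = iseg 0 → False := by
      intro heq
      obtain ⟨v, hv⟩ := hsegB (ℓ-1) (by omega)
      have h2 := hfactII (ℓ-1) (by omega) v hv
      rw [show ℓ-1+1 = ℓ by omega] at h2 hv
      rw [htlast, hxv_eq n x0 hdn] at h2
      obtain ⟨u, hu⟩ := hsegA 0 (by omega)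
      have h1 := hfactI 0 (by omega) u hu
      rw [ht0, hxv_eq 0 x0 hd0] at h1
      rw [ht0] at hu
      rw [heq] at h2 hv
      have huv : u = v := hm_inj _ (h1.trans h2.symm)
      rw [huv] at hu
      rw [htlast] at hv
      have := hd_inj _ _ (by omega : (0:ℕ)+1 < n) (by omega : n - 1 < n) (hu.trans hv.symm)
      omega
    rcases Nat.lt_or_ge ℓ 2 with hℓ2 | hℓ2
    · exact (hwrap (by rw [show ℓ - 1 = 0 by omega])).elim
    -- gaps are at least 3
    have hgap3 : ∀ j, j < ℓ → t j + 3 ≤ t (j+1) := by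
      intro j hj
      have hg2 := hgap2 j hj
      by_contra hcon
      have heq2 : t (j+1) = t j + 2 := by omega
      obtain ⟨u, hu⟩ := hsegA j hj
      have h1 := hfactI j hj u hu
      have h2 : m (iseg j) u = xv (t (j+1)) := by
        apply hfactII j hj
        rw [heq2, show t j + 2 - 1 = t j + 1 by omega]
        exact hu
      have hxeq : xv (t j) = xv (t (j+1)) := h1.symm.trans h2
      have hdj : d (t j) = d (t (j+1)) := by
        rw [hdxv j (by omega), hdxv (j+1) (by omega), hxeq]
      have hjn : t j < n := by
        have := hmono j ℓ hj (by omega)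
        rw [htlast] at this
        omega
      rcases Nat.lt_or_ge (j+1) ℓ with hcase | hcase
      · have h1n : t (j+1) < n := by
          have := hmono (j+1) ℓ hcase (by omega)
          rw [htlast] at this
          omega
        have := hd_inj _ _ hjn h1n hdj
        omega
      · have hjℓ : j + 1 = ℓ := by omega
        rw [hjℓ, htlast, hdn, ← hd0] at hdj
        have := hd_inj _ _ hjn (by omega) hdj
        have hj0 : j = 0 := by
          by_contra hne
          have := hmono 0 j (by omega) (by omega)
          rw [ht0] at this
          omega
        omega
    have hcount : ∀ j, j ≤ ℓ → 3 * j ≤ t j := by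
      intro j
      induction j with
      | zero => intro _; omega
      | succ j ih =>
        intro hj
        have := hgap3 j (by omega)
        have := ih (by omega)
        omega
    have hn3ℓ : 3 * ℓ ≤ n := by
      have := hcount ℓ le_rfl
      rwa [htlast] at this
    -- build the Berge closed walk in the hypergraph
    haveI : NeZero ℓ := ⟨by omega⟩
    set eZ : ZMod ℓ → ι := fun j => iseg ((j - 1).val) with heZ
    set xZ : ZMod ℓ → VH := fun j => xv (t (ZMod.val j)) with hxZ
    have hsub : ∀ j : ZMod ℓ, eZ (j+1) = iseg j.val := by
      intro j
      rw [heZ]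
      simp only [add_sub_cancel_right]
    have hvalsucc : ∀ i : ZMod ℓ, (i.val = ℓ - 1 ∧ (i+1).val = 0) ∨
        (i.val < ℓ - 1 ∧ (i+1).val = i.val + 1) := by
      intro i
      have hilt : i.val < ℓ := ZMod.val_lt _
      have hone : (1 : ZMod ℓ).val = 1 := ZMod.val_one'' (by omega)
      rcases Nat.lt_or_ge i.val (ℓ - 1) with h | h
      · right
        refine ⟨h, ?_⟩
        rw [ZMod.val_add, hone, Nat.mod_eq_of_lt (by omega)]
      · left
        have hieq : i.val = ℓ - 1 := by omega
        refine ⟨hieq, ?_⟩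
        rw [ZMod.val_add, hone, hieq, Nat.sub_add_cancel (by omega), Nat.mod_self]
    have hcondZ : ∀ j : ZMod ℓ, xZ j ∈ edges (eZ j) ∧ xZ j ∈ edges (eZ (j+1)) := by
      intro j
      have hjj : j = (j - 1) + 1 := by ring
      constructor
      · rw [hxZ, heZ]
        simp only []
        rcases hvalsucc (j - 1) with ⟨h1, h2⟩ | ⟨h1, h2⟩
        · have hjval : j.val = 0 := by rw [hjj]; exact h2
          rw [hjval, h1, ht0, hxv_eq 0 x0 hd0]
          -- x0 ∈ edges (iseg (ℓ-1))
          obtain ⟨v, hv⟩ := hsegB (ℓ-1) (by omega)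
          have hf := hfactII (ℓ-1) (by omega) v hv
          rw [show ℓ-1+1 = ℓ by omega, htlast, hxv_eq n x0 hdn] at hf
          rw [← hm_range]
          exact ⟨v, hf⟩
        · have hjval : j.val = (j-1).val + 1 := by nth_rewrite 1 [hjj]; exact h2
          rw [hjval]
          exact hmemII ((j-1).val) (by have := ZMod.val_lt j; omega)
      · rw [hsub j, hxZ]
        exact hmemI j.val (ZMod.val_lt _)
    have hconsZ : ∀ j : ZMod ℓ, eZ j ≠ eZ (j+1) := by
      intro j
      rw [hsub j, heZ]
      simp only []
      have hjj : j = (j - 1) + 1 := by ring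
      rcases hvalsucc (j - 1) with ⟨h1, h2⟩ | ⟨h1, h2⟩
      · have hjval : j.val = 0 := by rw [hjj]; exact h2
        rw [hjval, h1]
        exact fun h => hwrap h
      · have hjval : j.val = (j-1).val + 1 := by nth_rewrite 1 [hjj]; exact h2
        rw [hjval]
        exact hfactIII ((j-1).val) (by have := ZMod.val_lt j; omega)
    have hxZinj : Function.Injective xZ := by
      intro j1 j2 h
      rw [hxZ] at h
      simp only [] at h
      have hv1 : j1.val < ℓ := ZMod.val_lt _
      have hv2 : j2.val < ℓ := ZMod.val_lt _
      have hl1 : t j1.val < n := by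
        have := hmono j1.val ℓ hv1 (by omega)
        rw [htlast] at this
        omega
      have hl2 : t j2.val < n := by
        have := hmono j2.val ℓ hv2 (by omega)
        rw [htlast] at this
        omega
      have hdd12 : d (t j1.val) = d (t j2.val) := by
        rw [hdxv j1.val (by omega), hdxv j2.val (by omega), h]
      have hteq := hd_inj _ _ hl1 hl2 hdd12
      have hvaleq : j1.val = j2.val := by
        by_contra hne
        rcases Nat.lt_or_ge j1.val j2.val with hlt | hge
        · have := hmono j1.val j2.val hlt (by omega)
          omega
        · have := hmono j2.val j1.val (by omega) (by omega)
          omega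
      exact ZMod.val_injective ℓ hvaleq
    obtain ⟨ℓ', h2ℓ', hℓ'ℓ, e', x', he', hx', hc'⟩ :=
      shorten edges ℓ hℓ2 eZ xZ hxZinj hconsZ hcondZ
    have hge : (g+2)/3 ≤ ℓ' := by
      by_contra hcon
      exact hHgirth ℓ' h2ℓ' (by omega) ⟨e', x', he', hx', hc'⟩
    omega

end HT


/-- if the hypergraph with hyperedges `edges i` has (Berge) girth at
least `⌈g/3⌉` (no Berge cycle on `2 ≤ ℓ < ⌈g/3⌉` distinct hyperedges and distinct
vertices), the graph `G'` has girth at least `g`, and each copy of `G'` is joined to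
its hyperedge by a perfect matching, then the hyper-Tutte graph has girth at least
`g`. -/
theorem stmt_11 {VH VG ι : Type} (g : ℕ)
    (edges : ι → Set VH) (G' : SimpleGraph VG) (m : ι → VG → VH)
    (hm_inj : ∀ i, Function.Injective (m i))
    (hm_range : ∀ i, Set.range (m i) = edges i)
    (hG'girth : (g : ℕ∞) ≤ G'.egirth)
    (hHgirth : ∀ ℓ : ℕ, 2 ≤ ℓ → ℓ < (g + 2) / 3 →
      ¬ ∃ (e : ZMod ℓ → ι) (x : ZMod ℓ → VH),
          Function.Injective e ∧ Function.Injective x ∧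
          ∀ j : ZMod ℓ, x j ∈ edges (e j) ∧ x j ∈ edges (e (j + 1))) :
    (g : ℕ∞) ≤ (hyperTutte G' m).egirth := by
  rw [SimpleGraph.le_egirth]
  intro a w hw
  have hn3 : 3 ≤ w.length := hw.three_le_length
  haveI : NeZero w.length := ⟨by omega⟩
  set n := w.length with hn
  set c : ZMod n → (VH ⊕ ι × VG) := fun k => w.getVert k.val with hc
  have hcinj : Function.Injective c := by
    intro k1 k2 h
    exact ZMod.val_injective n
      (HT.cycle_getVert_inj hw (ZMod.val_lt k1) (ZMod.val_lt k2) h)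
  have hcadj : ∀ k, (hyperTutte G' m).Adj (c k) (c (k+1)) := by
    intro k
    have hkv : k.val < n := ZMod.val_lt k
    have hone : (1 : ZMod n).val = 1 := ZMod.val_one'' (by omega)
    rcases Nat.lt_or_ge (k.val + 1) n with h | h
    · have hsucc : (k+1).val = k.val + 1 := by
        rw [ZMod.val_add, hone, Nat.mod_eq_of_lt (by omega)]
      rw [hc]
      simp only [hsucc]
      exact w.adj_getVert_succ hkv
    · have hk1 : (k+1).val = 0 := by
        rw [ZMod.val_add, hone, show k.val + 1 = n by omega, Nat.mod_self]
      have hc2 : c (k+1) = w.getVert n := by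
        rw [hc]
        simp only [hk1]
        rw [w.getVert_zero, hn, w.getVert_length]
      have hc1 : c k = w.getVert (n-1) := by
        rw [hc]
        simp only [show k.val = n - 1 by omega]
      rw [hc1, hc2]
      have hadj := w.adj_getVert_succ (i := n - 1) (by omega)
      rwa [show n - 1 + 1 = n by omega] at hadj
  have := HT.main g edges G' m hm_inj hm_range hG'girth hHgirth hn3 c hcinj hcadj
  exact_mod_cast Nat.cast_le.mpr this
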